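/- Let P(ζ) = a·ζ·ζ̄ + b·ζ̄ + b̄·ζ + c be a Hermitian quadratic polynomial with a, b, c ∈ Γ and a, c ∈ ℝ. Let z ∈ ℂ' be a root of P, let (a_n)_{n≥0} be a continued fraction expansion of z over Γ with iteration sequence (z_n) and Q-pair (p_n), (q_n), and suppose |q_n| ≤ |q_{n+1}| for all n. Then at least one of the following holds: (i) there exists a strictly increasing sequence (n_k) in ℕ such that P(p_{n_k}/q_{n_k}) = 0 for all k; (ii) the sequence (a_n) is bounded. In particular, if P has no root in K, then (a_n) is bounded. -/

import Mathlib

/-- The quotient field of a subring `Γ` of `ℂ`, as a subset of `ℂ`. -/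
def quotField (Γ : Subring ℂ) : Set ℂ :=
  {x | ∃ p ∈ Γ, ∃ q ∈ Γ, q ≠ 0 ∧ x = p / q}

/-- `(a n)` is a continued fraction expansion of `z` over `Γ`, with iteration
sequence `(zs n)`: `zs 0 = z`, `0 < |zs n - a n| < 1` and `zs (n+1) = (zs n - a n)⁻¹`. -/
def IsCFE (Γ : Subring ℂ) (z : ℂ) (a zs : ℕ → ℂ) : Prop :=
  (∀ n, a n ∈ Γ) ∧ zs 0 = z ∧
    (∀ n, 0 < ‖zs n - a n‖ ∧ ‖zs n - a n‖ < 1) ∧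
    (∀ n, zs (n + 1) = (zs n - a n)⁻¹)

/-- The Q-pair of a sequence of partial quotients, with indices shifted by one:
`p (n+1)` is the paper's `p_n` and `q (n+1)` is the paper's `q_n`
(so `p 0 = p_{-1} = 1` and `q 0 = q_{-1} = 0`). -/
def IsQPair (a p q : ℕ → ℂ) : Prop :=
  p 0 = 1 ∧ p 1 = a 0 ∧ (∀ n, p (n + 2) = a (n + 1) * p (n + 1) + p n) ∧
  q 0 = 0 ∧ q 1 = 1 ∧ (∀ n, q (n + 2) = a (n + 1) * q (n + 1) + q n)


/-- The Hermitian quadratic polynomial `P(ζ) = a ζ ζ̄ + b ζ̄ + b̄ ζ + c`. -/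
def hermPoly (a b c ζ : ℂ) : ℂ :=
  a * ζ * (starRingEnd ℂ) ζ + b * (starRingEnd ℂ) ζ + (starRingEnd ℂ) b * ζ + c

/- ### Auxiliary lemmas -/

open Complex Submodule in
/-- Discreteness of a subring of `ℂ` gives an isolation radius at `0`. -/
lemma stmt9_exists_eta (Γ : Subring ℂ) (hdisc : DiscreteTopology Γ) :
    ∃ η > 0, ∀ x ∈ Γ, ‖x‖ < η → x = 0 := by
  have hopen : IsOpen ({(0 : Γ)} : Set Γ) := isOpen_discrete _
  rw [isOpen_induced_iff] at hopen
  obtain ⟨U, hU, hUeq⟩ := hopen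
  have h0U : (0 : ℂ) ∈ U := by
    have : (0 : Γ) ∈ (Subtype.val ⁻¹' U : Set Γ) := by rw [hUeq]; rfl
    simpa using this
  obtain ⟨η, hη, hball⟩ := Metric.isOpen_iff.mp hU 0 h0U
  refine ⟨η, hη, fun x hx hxa => ?_⟩
  have : x ∈ U := hball (by simpa [Complex.dist_eq] using hxa)
  have : (⟨x, hx⟩ : Γ) ∈ (Subtype.val ⁻¹' U : Set Γ) := this
  rw [hUeq] at this
  simpa using congrArg Subtype.val this

open Complex Submodule in
/-- A discrete subring of `ℂ` is closed under complex conjugation. -/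
lemma stmt9_conj_mem (Γ : Subring ℂ) (hdisc : DiscreteTopology Γ)
    {x : ℂ} (hx : x ∈ Γ) : (starRingEnd ℂ) x ∈ Γ := by
  by_cases hreal : ∀ y ∈ Γ, (y : ℂ).im = 0
  · rw [Complex.conj_eq_iff_im.mpr (hreal x hx)]; exact hx
  push_neg at hreal
  obtain ⟨ω, hωΓ, hωim⟩ := hreal
  -- the subring as a ℤ-submodule
  set L : Submodule ℤ ℂ := AddSubgroup.toIntSubmodule Γ.toAddSubgroup with hL
  have h1 : (1 : ℂ) ∈ L := Γ.one_mem
  have h2 : ω ∈ L := hωΓ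
  haveI hdL : DiscreteTopology L := hdisc
  haveI : IsZLattice ℝ L := by
    constructor
    rw [eq_top_iff]
    intro c _
    have : c ∈ span ℝ ({1, ω} : Set ℂ) := by
      rw [mem_span_pair]
      refine ⟨c.re - c.im * ω.re / ω.im, c.im / ω.im, ?_⟩
      apply Complex.ext <;>
        simp [Complex.add_re, Complex.add_im, Complex.smul_re, Complex.smul_im] <;>
        field_simp <;> ring
    exact Submodule.span_mono (by
      intro y hy
      rcases Set.mem_insert_iff.mp hy with rfl | hy
      · exact h1
      · rw [Set.mem_singleton_iff.mp hy]; exact h2) this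
  haveI hfin : Module.Finite ℤ L := ZLattice.module_finite ℝ L
  haveI hfree : Module.Free ℤ L := ZLattice.module_free ℝ L
  have hrank : Module.finrank ℤ L = 2 := by
    rw [ZLattice.rank ℝ L, Complex.finrank_real_complex]
  -- any three elements of Γ are ℤ-linearly dependent
  have hdep : ∀ v : Fin 3 → ℂ, (∀ i, v i ∈ Γ) →
      ∃ g : Fin 3 → ℤ, (g 0 : ℂ) * v 0 + g 1 * v 1 + g 2 * v 2 = 0 ∧ ∃ i, g i ≠ 0 := by
    intro v hv
    have hnli : ¬ LinearIndependent ℤ (fun i => (⟨v i, hv i⟩ : L)) := by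
      intro hli
      have := hli.fintype_card_le_finrank
      rw [hrank] at this
      simp [Fintype.card_fin] at this
    rw [Fintype.not_linearIndependent_iff] at hnli
    obtain ⟨g, hg, i, hi⟩ := hnli
    refine ⟨g, ?_, i, hi⟩
    have := congrArg (Subtype.val : L → ℂ) hg
    simpa [Fin.sum_univ_three, zsmul_eq_mul] using this
  have hint : ∀ y ∈ Γ, IsIntegral ℤ y := by
    intro y hy
    let Salg : Subalgebra ℤ ℂ :=
      { Γ with algebraMap_mem' := fun n => by simpa using intCast_mem Γ n }
    have hfg : Subalgebra.toSubmodule Salg |>.FG := by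
      have hLfg : L.FG := Module.Finite.iff_fg.mp hfin
      have he : Subalgebra.toSubmodule Salg = L := by
        rw [hL]; ext w; rfl
      rwa [he]
    exact IsIntegral.of_mem_of_fg Salg hfg y hy
  have hωconj : ω - (starRingEnd ℂ) ω ≠ 0 := by
    simp only [sub_ne_zero]
    intro h
    have := congrArg Complex.im h
    simp [Complex.conj_im] at this
    exact hωim (by linarith)
  -- relation for ω
  obtain ⟨g, hg, hgne⟩ := hdep ![1, ω, ω * ω] (by
    intro i; fin_cases i <;> simp [Γ.one_mem, hωΓ, Γ.mul_mem hωΓ hωΓ])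
  simp only [Matrix.cons_val_zero, Matrix.cons_val_one, Matrix.head_cons, mul_one,
    Matrix.cons_val_two, Matrix.tail_cons] at hg
  have hg2 : g 2 ≠ 0 := by
    intro h2
    rw [h2] at hg
    push_cast at hg
    have him := congrArg Complex.im hg
    simp [Complex.add_im, Complex.mul_im] at him
    have hg1 : g 1 = 0 := by
      rcases him with h | h
      · exact_mod_cast h
      · exact absurd h hωim
    rw [hg1] at hg
    have hg0 : g 0 = 0 := by
      have : ((g 0 : ℂ)) = 0 := by push_cast at hg ⊢; linear_combination hg
      exact_mod_cast this
    obtain ⟨i, hi⟩ := hgne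
    fin_cases i <;> simp_all
  -- conjugated relation for ω
  have hgc : (g 0 : ℂ) + g 1 * (starRingEnd ℂ) ω + g 2 * ((starRingEnd ℂ) ω * (starRingEnd ℂ) ω) = 0 := by
    have := congrArg (starRingEnd ℂ) hg
    simpa [map_add, map_mul, map_intCast] using this
  have htr : (g 1 : ℂ) + g 2 * (ω + (starRingEnd ℂ) ω) = 0 := by
    have key : (ω - (starRingEnd ℂ) ω) * ((g 1 : ℂ) + g 2 * (ω + (starRingEnd ℂ) ω)) = 0 := by
      linear_combination hg - hgc
    exact (mul_eq_zero.mp key).resolve_left hωconj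
  -- relation for x
  obtain ⟨h, hh, hhne⟩ := hdep ![1, ω, x] (by
    intro i; fin_cases i <;> simp [Γ.one_mem, hωΓ, hx])
  simp only [Matrix.cons_val_zero, Matrix.cons_val_one, Matrix.head_cons, mul_one,
    Matrix.cons_val_two, Matrix.tail_cons] at hh
  have hh2 : h 2 ≠ 0 := by
    intro h2
    rw [h2] at hh
    push_cast at hh
    have him := congrArg Complex.im hh
    simp [Complex.add_im] at him
    have hh1 : h 1 = 0 := by
      rcases him with h' | h'
      · exact_mod_cast h'
      · exact absurd h' hωim
    rw [hh1] at hh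
    have hh0 : h 0 = 0 := by
      have : ((h 0 : ℂ)) = 0 := by push_cast at hh ⊢; linear_combination hh
      exact_mod_cast this
    obtain ⟨i, hi⟩ := hhne
    fin_cases i <;> simp_all
  have hhc : (h 0 : ℂ) + h 1 * (starRingEnd ℂ) ω + h 2 * (starRingEnd ℂ) x = 0 := by
    have := congrArg (starRingEnd ℂ) hh
    simpa [map_add, map_mul, map_intCast] using this
  -- the trace of x is the rational s
  set s : ℚ := ((h 1 : ℚ) * g 1 - 2 * h 0 * g 2) / (h 2 * g 2) with hs_def
  have hg2' : ((g 2 : ℚ)) ≠ 0 := Int.cast_ne_zero.mpr hg2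
  have hh2' : ((h 2 : ℚ)) ≠ 0 := Int.cast_ne_zero.mpr hh2
  have hg2c : ((g 2 : ℂ)) ≠ 0 := Int.cast_ne_zero.mpr hg2
  have hh2c : ((h 2 : ℂ)) ≠ 0 := Int.cast_ne_zero.mpr hh2
  have hs : x + (starRingEnd ℂ) x = (s : ℂ) := by
    rw [hs_def]
    push_cast
    field_simp
    linear_combination (g 2 : ℂ) * hh + (g 2 : ℂ) * hhc - (h 1 : ℂ) * htr
  -- x + conj x is integral over ℤ, hence an integer
  have hint_sum : IsIntegral ℤ (x + (starRingEnd ℂ) x) :=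
    (hint x hx).add ((hint x hx).map (starRingEnd ℂ).toIntAlgHom)
  rw [hs] at hint_sum
  have : IsIntegral ℤ s := by
    rwa [show ((s : ℂ)) = algebraMap ℚ ℂ s from (eq_ratCast (algebraMap ℚ ℂ) s).symm,
      isIntegral_algebraMap_iff (algebraMap ℚ ℂ).injective] at hint_sum
  obtain ⟨m, hm⟩ := IsIntegrallyClosed.isIntegral_iff.mp this
  have hsm : (s : ℂ) = (m : ℂ) := by
    rw [← hm]; push_cast; norm_num
  have : (starRingEnd ℂ) x = (m : ℂ) - x := by
    rw [← hsm, ← hs]; ring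
  rw [this]
  exact Γ.sub_mem (intCast_mem Γ m) hx

/-- A sequence that is eventually bounded is bounded. -/
lemma stmt9_bdd_of_eventually (f : ℕ → ℝ) : ∀ (N : ℕ) (C : ℝ), (∀ n, N ≤ n → f n ≤ C) →
    ∃ M, ∀ n, f n ≤ M := by
  intro N
  induction N with
  | zero => exact fun C h => ⟨C, fun n => h n (Nat.zero_le n)⟩
  | succ k ih =>
      intro C h
      refine ih (max C (f k)) (fun n hn => ?_)
      rcases eq_or_lt_of_le hn with rfl | hlt
      · exact le_max_right _ _
      · exact le_trans (h n hlt) (le_max_left _ _)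

/-- The numerator form of the Hermitian polynomial at `P/Q`. -/
lemma stmt9_herm_num (A B C P Q : ℂ) (hQ : Q ≠ 0) :
    A * P * (starRingEnd ℂ) P + B * (starRingEnd ℂ) P * Q
      + (starRingEnd ℂ) B * P * (starRingEnd ℂ) Q + C * Q * (starRingEnd ℂ) Q
    = (Q * (starRingEnd ℂ) Q) * hermPoly A B C (P / Q) := by
  have hQc : (starRingEnd ℂ) Q ≠ 0 := by simpa using hQ
  unfold hermPoly
  rw [map_div₀]
  field_simp

/-- The numerator form of the Hermitian polynomial rewritten using `P = z Q + E`
where `z` is a root. -/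
lemma stmt9_herm_num' (A B C z P Q E : ℂ) (hroot : hermPoly A B C z = 0)
    (hAre : A.im = 0) (hCre : C.im = 0) (hPE : P = z * Q + E) :
    A * P * (starRingEnd ℂ) P + B * (starRingEnd ℂ) P * Q
      + (starRingEnd ℂ) B * P * (starRingEnd ℂ) Q + C * Q * (starRingEnd ℂ) Q =
    A * E * (starRingEnd ℂ) E + (A * z + B) * Q * (starRingEnd ℂ) E
      + (A * (starRingEnd ℂ) z + (starRingEnd ℂ) B) * (starRingEnd ℂ) Q * E := by
  have hA' : (starRingEnd ℂ) A = A := Complex.conj_eq_iff_im.mpr hAre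
  have hC' : (starRingEnd ℂ) C = C := Complex.conj_eq_iff_im.mpr hCre
  unfold hermPoly at hroot
  rw [hPE]
  simp only [map_add, map_mul, hA', hC']
  linear_combination (Q * (starRingEnd ℂ) Q) * hroot

/-- Corollary 3.7: for a root `z ∈ ℂ'` of a Hermitian quadratic polynomial `P` with
coefficients in `Γ` (`a, c` real), if `|q_n| ≤ |q_{n+1}|` for all `n` then either
infinitely many convergents `p_n/q_n` are roots of `P`, or the partial quotients are
bounded; in particular if `P` has no root in `K` then `(a_n)` is bounded. -/
theorem stmt_9 (Γ : Subring ℂ) (hdisc : DiscreteTopology Γ)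
    (A B C : ℂ) (hA : A ∈ Γ) (hB : B ∈ Γ) (hC : C ∈ Γ)
    (hAre : A.im = 0) (hCre : C.im = 0)
    (z : ℂ) (hz : z ∉ quotField Γ) (hroot : hermPoly A B C z = 0)
    (a zs p q : ℕ → ℂ) (hcf : IsCFE Γ z a zs) (hpq : IsQPair a p q)
    (hmono : ∀ n : ℕ, ‖q (n + 1)‖ ≤ ‖q (n + 2)‖) :
    ((∃ nk : ℕ → ℕ, StrictMono nk ∧
        ∀ k, hermPoly A B C (p (nk k + 1) / q (nk k + 1)) = 0)
      ∨ (∃ M : ℝ, ∀ n, ‖a n‖ ≤ M))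
    ∧ ((∀ w ∈ quotField Γ, hermPoly A B C w ≠ 0) →
        ∃ M : ℝ, ∀ n, ‖a n‖ ≤ M) := by
  obtain ⟨haΓ, hz0, habs, hrec⟩ := hcf
  obtain ⟨hp0, hp1, hpr, hq0, hq1, hqr⟩ := hpq
  have hzsne : ∀ n, zs n - a n ≠ 0 := fun n => norm_pos_iff.mp (habs n).1
  have hzsinv : ∀ n, zs (n + 1) * (zs n - a n) = 1 := fun n => by
    rw [hrec n]; exact inv_mul_cancel₀ (hzsne n)
  have hq1le : ∀ n, 1 ≤ ‖q (n + 1)‖ := by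
    intro n
    induction n with
    | zero => simp [hq1]
    | succ k ih => exact le_trans ih (hmono k)
  have hqne : ∀ n, q (n + 1) ≠ 0 := fun n => by
    intro h
    have := hq1le n
    rw [h] at this
    simp at this
    linarith
  have hqabs : ∀ n, ‖q n‖ ≤ ‖q (n + 1)‖ := by
    intro n
    cases n with
    | zero => simp [hq0]
    | succ k => exact hmono k
  have hmem : ∀ n, (p n ∈ Γ ∧ q n ∈ Γ) ∧ (p (n + 1) ∈ Γ ∧ q (n + 1) ∈ Γ) := by
    intro n
    induction n with
    | zero =>
        refine ⟨⟨by rw [hp0]; exact Γ.one_mem, by rw [hq0]; exact Γ.zero_mem⟩,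
          ⟨by rw [hp1]; exact haΓ 0, by rw [hq1]; exact Γ.one_mem⟩⟩
    | succ k ih =>
        exact ⟨ih.2, ⟨by rw [hpr]; exact Γ.add_mem (Γ.mul_mem (haΓ _) ih.2.1) ih.1.1,
          by rw [hqr]; exact Γ.add_mem (Γ.mul_mem (haΓ _) ih.2.2) ih.1.2⟩⟩
  set e : ℕ → ℂ := fun n => p n - z * q n with he
  have hεrec : ∀ n, e (n + 1) = -(zs n - a n) * e n := by
    intro n
    induction n with
    | zero => simp only [he, hp0, hp1, hq0, hq1, hz0]; ring
    | succ k ih =>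
        have hek : e k = -(zs (k + 1) * e (k + 1)) := by
          calc e k = (zs (k + 1) * (zs k - a k)) * e k := by rw [hzsinv k]; ring
          _ = -(zs (k + 1) * e (k + 1)) := by rw [ih]; ring
        have : e (k + 2) = a (k + 1) * e (k + 1) + e k := by
          simp only [he, hpr k, hqr k]; ring
        rw [this, hek]; ring
  have hεle1 : ∀ n, ‖e n‖ ≤ 1 := by
    intro n
    induction n with
    | zero => simp [he, hp0, hq0]
    | succ k ih =>
        rw [hεrec k, norm_mul]
        have h1 : ‖-(zs k - a k)‖ ≤ 1 := by
          rw [norm_neg]; exact le_of_lt (habs k).2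
        calc ‖-(zs k - a k)‖ * ‖e k‖ ≤ 1 * 1 :=
              mul_le_mul h1 ih (norm_nonneg _) zero_le_one
        _ = 1 := by ring
  have hG : ∀ n, ‖e (n + 1) * (q (n + 1) * zs (n + 1) + q n)‖ = 1 := by
    intro n
    induction n with
    | zero =>
        have h0 := hzsinv 0
        rw [hz0] at h0
        have : e 1 * (q 1 * zs 1 + q 0) = -1 := by
          simp only [he, hp1, hq1, hq0]
          linear_combination -h0
        rw [this]; simp
    | succ k ih =>
        have key : e (k + 2) * (q (k + 2) * zs (k + 2) + q (k + 1)) =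
            -(e (k + 1) * (q (k + 1) * zs (k + 1) + q k)) := by
          rw [hεrec (k + 1), hqr k]
          linear_combination (-(e (k + 1)) * (a (k + 1) * q (k + 1) + q k)) * hzsinv (k + 1)
        rw [key, norm_neg]; exact ih
  have hεne : ∀ n, e (n + 1) ≠ 0 := by
    intro n h
    have := hG n
    rw [h] at this
    simp at this
  -- key inequality : a lower bound on `|q (n+1)| * |e (n+1)|` bounds `|zs (n+1)|`
  have hZbound : ∀ (c : ℝ), 0 < c → ∀ n, c ≤ ‖q (n + 1)‖ * ‖e (n + 1)‖ →
      ‖zs (n + 1)‖ ≤ 1 + 1 / c := by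
    intro c hc n hcu
    set E := ‖e (n + 1)‖ with hE
    set Q := ‖q (n + 1)‖ with hQ
    set Z := ‖zs (n + 1)‖ with hZ
    have hEpos : 0 < E := norm_pos_iff.mpr (hεne n)
    have hQ1 : 1 ≤ Q := hq1le n
    have hX : E * ‖q (n + 1) * zs (n + 1) + q n‖ = 1 := by
      rw [← norm_mul]; exact hG n
    have htri : Q * Z ≤ ‖q (n + 1) * zs (n + 1) + q n‖ + ‖q n‖ := by
      have h1 : ‖q (n + 1) * zs (n + 1)‖ ≤
          ‖q (n + 1) * zs (n + 1) + q n‖ + ‖q n‖ := by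
        calc ‖q (n + 1) * zs (n + 1)‖
            = ‖(q (n + 1) * zs (n + 1) + q n) + (- q n)‖ := by ring_nf
          _ ≤ ‖q (n + 1) * zs (n + 1) + q n‖ + ‖-q n‖ :=
              norm_add_le _ _
          _ = ‖q (n + 1) * zs (n + 1) + q n‖ + ‖q n‖ := by
              rw [norm_neg]
      rw [← norm_mul]; exact h1
    have hqn : ‖q n‖ ≤ Q := hqabs n
    have hXval : ‖q (n + 1) * zs (n + 1) + q n‖ = 1 / E := by
      field_simp at hX ⊢
      linarith [hX]
    rw [hXval] at htri
    have hQE : c ≤ Q * E := hcu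
    have hQEpos : 0 < Q * E := lt_of_lt_of_le hc hQE
    have h2 : Q * Z ≤ 1 / E + Q := le_trans htri (by linarith)
    have h3 : Z * (Q * E) ≤ 1 + Q * E := by
      calc Z * (Q * E) = (Q * Z) * E := by ring
        _ ≤ (1 / E + Q) * E := mul_le_mul_of_nonneg_right h2 (le_of_lt hEpos)
        _ = 1 + Q * E := by field_simp
    have h3' : Z ≤ 1 / (Q * E) + 1 := by
      rw [div_add' _ _ _ (ne_of_gt hQEpos), le_div_iff₀ hQEpos]
      linarith
    have h4 : 1 / (Q * E) ≤ 1 / c := one_div_le_one_div_of_le hc hQE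
    linarith
  -- the set of indices where the convergent is a root
  set Pred : ℕ → Prop := fun n => hermPoly A B C (p (n + 1) / q (n + 1)) = 0 with hPred
  by_cases hSinf : (setOf Pred).Infinite
  · constructor
    · left
      exact ⟨Nat.nth Pred, Nat.nth_strictMono hSinf,
        fun k => Nat.nth_mem_of_infinite hSinf k⟩
    · intro hno
      exfalso
      have h0 : Pred (Nat.nth Pred 0) := Nat.nth_mem_of_infinite hSinf 0
      set n := Nat.nth Pred 0 with hn
      exact hno (p (n + 1) / q (n + 1))
        ⟨p (n + 1), (hmem (n + 1)).1.1, q (n + 1), (hmem (n + 1)).1.2, hqne n, rfl⟩ h0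
  · -- finitely many root convergents : the partial quotients are bounded
    have hSfin : (setOf Pred).Finite := Set.not_infinite.mp hSinf
    have hABne : ¬(A = 0 ∧ B = 0) := by
      rintro ⟨hA0, hB0⟩
      have hC0 : C = 0 := by
        have := hroot
        rw [hA0, hB0] at this
        simpa [hermPoly] using this
      apply hSinf
      have : setOf Pred = Set.univ :=
        Set.eq_univ_of_forall (fun n => by show Pred n; simp [hPred, hermPoly, hA0, hB0, hC0])
      rw [this]
      exact Set.infinite_univ
    set K := ‖A * z + B‖ with hK
    have hden : 0 < ‖A‖ + 2 * K := by
      by_cases hA0 : A = 0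
      · have hB0 : B ≠ 0 := fun h => hABne ⟨hA0, h⟩
        have : K = ‖B‖ := by rw [hK, hA0]; simp
        have hBpos : 0 < ‖B‖ := norm_pos_iff.mpr hB0
        have := norm_nonneg A
        linarith
      · have hApos : 0 < ‖A‖ := norm_pos_iff.mpr hA0
        have : 0 ≤ K := norm_nonneg _
        linarith
    obtain ⟨η, hη, hηΓ⟩ := stmt9_exists_eta Γ hdisc
    obtain ⟨N, hN⟩ := hSfin.bddAbove
    set c := η / (‖A‖ + 2 * K) with hc_def
    have hc : 0 < c := div_pos hη hden
    have hbound : ∀ n, N < n → ‖a (n + 1)‖ ≤ 2 + 1 / c := by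
      intro n hn
      have hnotS : ¬ Pred n := fun h => absurd (hN h) (not_le.mpr hn)
      set F := A * p (n + 1) * (starRingEnd ℂ) (p (n + 1))
        + B * (starRingEnd ℂ) (p (n + 1)) * q (n + 1)
        + (starRingEnd ℂ) B * p (n + 1) * (starRingEnd ℂ) (q (n + 1))
        + C * q (n + 1) * (starRingEnd ℂ) (q (n + 1)) with hF
      have hFne : F ≠ 0 := by
        intro h0
        apply hnotS
        have hq1 := stmt9_herm_num A B C (p (n + 1)) (q (n + 1)) (hqne n)
        rw [← hF, h0] at hq1
        have hqq : q (n + 1) * (starRingEnd ℂ) (q (n + 1)) ≠ 0 :=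
          mul_ne_zero (hqne n) (by simpa using hqne n)
        exact (mul_eq_zero.mp hq1.symm).resolve_left hqq
      have hFΓ : F ∈ Γ := by
        have cm : ∀ y ∈ Γ, (starRingEnd ℂ) y ∈ Γ := fun y hy => stmt9_conj_mem Γ hdisc hy
        exact Γ.add_mem (Γ.add_mem (Γ.add_mem
          (Γ.mul_mem (Γ.mul_mem hA (hmem (n + 1)).1.1) (cm _ (hmem (n + 1)).1.1))
          (Γ.mul_mem (Γ.mul_mem hB (cm _ (hmem (n + 1)).1.1)) (hmem (n + 1)).1.2))
          (Γ.mul_mem (Γ.mul_mem (cm _ hB) (hmem (n + 1)).1.1) (cm _ (hmem (n + 1)).1.2)))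
          (Γ.mul_mem (Γ.mul_mem hC (hmem (n + 1)).1.2) (cm _ (hmem (n + 1)).1.2))
      have hFeta : η ≤ ‖F‖ := by
        by_contra hlt
        exact hFne (hηΓ F hFΓ (not_le.mp hlt))
      -- rewrite F using the root
      have hPE : p (n + 1) = z * q (n + 1) + e (n + 1) := by
        simp only [he]; ring
      have hF2 : F = A * e (n + 1) * (starRingEnd ℂ) (e (n + 1))
          + (A * z + B) * q (n + 1) * (starRingEnd ℂ) (e (n + 1))
          + (A * (starRingEnd ℂ) z + (starRingEnd ℂ) B) * (starRingEnd ℂ) (q (n + 1)) * e (n + 1) := by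
        rw [hF]
        exact stmt9_herm_num' A B C z _ _ _ hroot hAre hCre hPE
      set E := ‖e (n + 1)‖ with hE
      set Q := ‖q (n + 1)‖ with hQ
      have hconjK : ‖A * (starRingEnd ℂ) z + (starRingEnd ℂ) B‖ = K := by
        have : A * (starRingEnd ℂ) z + (starRingEnd ℂ) B = (starRingEnd ℂ) (A * z + B) := by
          simp only [map_add, map_mul, Complex.conj_eq_iff_im.mpr hAre]
        rw [this, Complex.norm_conj]
      have hFle : ‖F‖ ≤ (‖A‖ + 2 * K) * (Q * E) := by
        have t1 : ‖A * e (n + 1) * (starRingEnd ℂ) (e (n + 1))‖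
            = ‖A‖ * E * E := by
          rw [norm_mul, norm_mul, Complex.norm_conj]
        have t2 : ‖(A * z + B) * q (n + 1) * (starRingEnd ℂ) (e (n + 1))‖
            = K * Q * E := by
          rw [norm_mul, norm_mul, Complex.norm_conj]
        have t3 : ‖(A * (starRingEnd ℂ) z + (starRingEnd ℂ) B)
            * (starRingEnd ℂ) (q (n + 1)) * e (n + 1)‖ = K * Q * E := by
          rw [norm_mul, norm_mul, Complex.norm_conj, hconjK]
        have htri2 : ‖F‖ ≤ ‖A‖ * E * E + K * Q * E + K * Q * E := by
          rw [hF2]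
          calc ‖_ + _ + _‖
              ≤ ‖A * e (n + 1) * (starRingEnd ℂ) (e (n + 1))
                  + (A * z + B) * q (n + 1) * (starRingEnd ℂ) (e (n + 1))‖
                + ‖(A * (starRingEnd ℂ) z + (starRingEnd ℂ) B)
                  * (starRingEnd ℂ) (q (n + 1)) * e (n + 1)‖ := norm_add_le _ _
            _ ≤ ‖A * e (n + 1) * (starRingEnd ℂ) (e (n + 1))‖
                + ‖(A * z + B) * q (n + 1) * (starRingEnd ℂ) (e (n + 1))‖
                + ‖(A * (starRingEnd ℂ) z + (starRingEnd ℂ) B)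
                  * (starRingEnd ℂ) (q (n + 1)) * e (n + 1)‖ := by
                  have := norm_add_le (A * e (n + 1) * (starRingEnd ℂ) (e (n + 1)))
                    ((A * z + B) * q (n + 1) * (starRingEnd ℂ) (e (n + 1)))
                  linarith
            _ = ‖A‖ * E * E + K * Q * E + K * Q * E := by rw [t1, t2, t3]
        have hE1 : E ≤ 1 := hεle1 (n + 1)
        have hQ1' : 1 ≤ Q := hq1le n
        have hEnn : 0 ≤ E := norm_nonneg _
        have hAnn : 0 ≤ ‖A‖ := norm_nonneg _
        have hKnn : 0 ≤ K := norm_nonneg _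
        have h5 : E * E ≤ Q * E := by nlinarith
        have h6 : ‖A‖ * (E * E) ≤ ‖A‖ * (Q * E) :=
          mul_le_mul_of_nonneg_left h5 hAnn
        nlinarith [htri2, h6]
      have hu : c ≤ Q * E := by
        rw [hc_def, div_le_iff₀ hden]
        calc η ≤ ‖F‖ := hFeta
          _ ≤ (‖A‖ + 2 * K) * (Q * E) := hFle
          _ = Q * E * (‖A‖ + 2 * K) := by ring
      have hZn := hZbound c hc n hu
      have htri3 : ‖a (n + 1)‖ ≤ ‖zs (n + 1)‖
          + ‖zs (n + 1) - a (n + 1)‖ := by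
        calc ‖a (n + 1)‖
            = ‖zs (n + 1) + (-(zs (n + 1) - a (n + 1)))‖ := by ring_nf
          _ ≤ ‖zs (n + 1)‖ + ‖-(zs (n + 1) - a (n + 1))‖ :=
              norm_add_le _ _
          _ = ‖zs (n + 1)‖ + ‖zs (n + 1) - a (n + 1)‖ := by
              rw [norm_neg]
      have := (habs (n + 1)).2
      linarith
    have hbdd : ∃ M : ℝ, ∀ n, ‖a n‖ ≤ M := by
      apply stmt9_bdd_of_eventually (fun n => ‖a n‖) (N + 2) (2 + 1 / c)
      intro n hn
      obtain ⟨m, rfl⟩ : ∃ m, n = m + 1 := ⟨n - 1, by omega⟩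
      exact hbound m (by omega)
    exact ⟨Or.inr hbdd, fun _ => hbdd⟩
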